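/- Condition (G₀) holds for X = (𝒜, ℬ) if X = (𝒜, ℬ) is strong structurally controllable for λ = 0. That is: if for all (A,B) ∈ ℂ^{n×(n+n)} with the non-zero structure of (𝒜,ℬ) the matrix (−A, B) has rank n, then for every non-empty subset V ⊆ [1;n] of row indices there exists a column index v ∈ [1; n+r] such that V ∩ NZR(v) is a singleton. -/

import Mathlib

open Matrix Finset

/-- If a nonzero vector kills all columns of `M` from the left, `M` doesn't have
full row rank. -/
lemma rank_ne_of_left_kernel {n : ℕ} {m : Type*} [Fintype m]
    (M : Matrix (Fin n) m ℂ) (c : Fin n → ℂ) (hc : c ≠ 0)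
    (h : ∀ v, ∑ i, c i * M i v = 0) : M.rank ≠ n := by
  intro hr
  have hrt : Mᵀ.rank = n := by rw [Matrix.rank_transpose]; exact hr
  have hker : c ∈ LinearMap.ker Mᵀ.mulVecLin := by
    ext v
    simp only [Matrix.mulVecLin_apply, Matrix.mulVec, dotProduct,
      Matrix.transpose_apply, Pi.zero_apply]
    rw [← h v]
    exact Finset.sum_congr rfl fun i _ => mul_comm _ _
  have hrn := LinearMap.finrank_range_add_finrank_ker Mᵀ.mulVecLin
  have hfin : Module.finrank ℂ (Fin n → ℂ) = n := by simp
  rw [hfin] at hrn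
  have hthis : Matrix.rank Mᵀ + Module.finrank ℂ (LinearMap.ker Mᵀ.mulVecLin) = n := hrn
  rw [hrt] at hthis
  have hk0 : Module.finrank ℂ (LinearMap.ker Mᵀ.mulVecLin) = 0 := by omega
  rw [Submodule.finrank_eq_zero] at hk0
  rw [hk0] at hker
  exact hc (Submodule.mem_bot ℂ |>.mp hker)

theorem G0_of_ssc_zero (n r : ℕ)
    (𝒜 : Matrix (Fin n) (Fin n) Bool) (ℬ : Matrix (Fin n) (Fin r) Bool)
    (hssc : ∀ (A : Matrix (Fin n) (Fin n) ℂ) (B : Matrix (Fin n) (Fin r) ℂ),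
      (∀ i j, A i j ≠ 0 ↔ 𝒜 i j = true) →
      (∀ i j, B i j ≠ 0 ↔ ℬ i j = true) →
      (Matrix.of (fun i (v : Fin n ⊕ Fin r) =>
        Sum.elim (fun j => (-A) i j) (fun j => B i j) v)).rank = n) :
    ∀ V : Finset (Fin n), V.Nonempty →
      ∃ v : Fin n ⊕ Fin r,
        (V.filter (fun i => Sum.elim (𝒜 i) (ℬ i) v = true)).card = 1 := by
  intro V hV
  by_contra hcon
  push_neg at hcon
  classical
  set P : Fin n → Fin n ⊕ Fin r → Bool := fun i v => Sum.elim (𝒜 i) (ℬ i) v with hPdef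
  set S : Fin n ⊕ Fin r → Finset (Fin n) := fun v => V.filter (fun i => P i v = true)
    with hSdef
  have hcard : ∀ v, (S v).card ≠ 1 := hcon
  set M : Matrix (Fin n) (Fin n ⊕ Fin r) ℂ := fun i v =>
    if P i v = true then (if (S v).max = (i : WithBot (Fin n)) then
      (1 : ℂ) - (S v).card else 1) else 0 with hMdef
  -- nonzero entries exactly on the pattern
  have hM_ne : ∀ i v, M i v ≠ 0 ↔ P i v = true := by
    intro i v
    constructor
    · intro h
      by_contra hp
      simp [hMdef, hp] at h
    · intro hp
      simp only [hMdef, hp, if_true]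
      split_ifs with hmax
      · have hi : i ∈ S v := Finset.mem_of_max hmax
        have h1 : 1 ≤ (S v).card := Finset.card_pos.mpr ⟨i, hi⟩
        have h2 : 2 ≤ (S v).card := by
          have := hcard v; omega
        have : ((S v).card : ℂ) ≠ 1 := by
          intro h
          have : ((S v).card : ℂ) = ((1 : ℕ) : ℂ) := by simpa using h
          exact hcard v (Nat.cast_injective this)
        intro h
        apply this
        linear_combination -h
      · exact one_ne_zero
  -- each column of M sums to zero over V
  have hsum : ∀ v, ∑ i ∈ V, M i v = 0 := by
    intro v
    have hfilter : ∑ i ∈ V, M i v = ∑ i ∈ S v,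
        (if (S v).max = (i : WithBot (Fin n)) then (1 : ℂ) - (S v).card else 1) := by
      rw [hSdef]
      rw [Finset.sum_filter]
    rw [hfilter]
    rcases Finset.eq_empty_or_nonempty (S v) with he | hne
    · simp [he]
    · set m := (S v).max' hne with hmdef
      have hmmax : (S v).max = (m : WithBot (Fin n)) := (Finset.coe_max' hne).symm
      have hmem : m ∈ S v := Finset.max'_mem _ hne
      rw [← Finset.add_sum_erase _ _ hmem]
      have h2 : 2 ≤ (S v).card := by
        have h1 : 1 ≤ (S v).card := Finset.card_pos.mpr ⟨m, hmem⟩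
        have := hcard v; omega
      have hrest : ∑ i ∈ (S v).erase m,
          (if (S v).max = (i : WithBot (Fin n)) then (1 : ℂ) - (S v).card else 1)
          = ((S v).erase m).card := by
        rw [Finset.sum_congr rfl (fun i hi => ?_)]
        · rw [Finset.sum_const, nsmul_eq_mul, mul_one]
        · have hne' : i ≠ m := Finset.ne_of_mem_erase hi
          have : ¬ ((S v).max = (i : WithBot (Fin n))) := by
            rw [hmmax]
            intro h
            exact hne' (WithBot.coe_injective h).symm
          simp [this]
      rw [hrest, if_pos hmmax, Finset.card_erase_of_mem hmem]
      have : (((S v).card - 1 : ℕ) : ℂ) = ((S v).card : ℂ) - 1 := by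
        have := Nat.cast_sub (by omega : 1 ≤ (S v).card) (R := ℂ)
        simpa using this
      rw [this]
      ring
  -- build the realization
  set A : Matrix (Fin n) (Fin n) ℂ := fun i j => -(M i (Sum.inl j)) with hAdef
  set B : Matrix (Fin n) (Fin r) ℂ := fun i j => M i (Sum.inr j) with hBdef
  have hA : ∀ i j, A i j ≠ 0 ↔ 𝒜 i j = true := by
    intro i j
    rw [hAdef]
    simp only [neg_ne_zero]
    exact hM_ne i (Sum.inl j)
  have hB : ∀ i j, B i j ≠ 0 ↔ ℬ i j = true := by
    intro i j
    exact hM_ne i (Sum.inr j)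
  have hrank := hssc A B hA hB
  have hMeq : (Matrix.of (fun i (v : Fin n ⊕ Fin r) =>
      Sum.elim (fun j => (-A) i j) (fun j => B i j) v)) = M := by
    ext i v
    cases v with
    | inl j => simp only [Matrix.of_apply, Sum.elim_inl, Matrix.neg_apply]; simp [hAdef]
    | inr j => simp [hBdef]
  rw [hMeq] at hrank
  -- contradiction with the dependent rows
  set c : Fin n → ℂ := fun i => if i ∈ V then 1 else 0 with hcdef
  have hc : c ≠ 0 := by
    obtain ⟨i, hi⟩ := hV
    intro h
    have := congrFun h i
    simp [hcdef, hi] at this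
  refine rank_ne_of_left_kernel M c hc (fun v => ?_) hrank
  have hterm : ∀ i, c i * M i v = if i ∈ V then M i v else 0 := by
    intro i
    rw [hcdef]
    split_ifs with h <;> simp [h]
  calc ∑ i, c i * M i v = ∑ i, if i ∈ V then M i v else 0 :=
        Finset.sum_congr rfl (fun i _ => hterm i)
    _ = ∑ i ∈ Finset.univ ∩ V, M i v := (Finset.sum_ite_mem _ _ _)
    _ = ∑ i ∈ V, M i v := by rw [Finset.univ_inter]
    _ = 0 := hsum v
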